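/- For every integer n ≥ 1 and every integer k with 0 ≤ k ≤ n(n+1)/2, T(n,k) = ((n,k)) + ∑_{a=1}^{n} (−1)^a · ∑ ((n, k − (i_1+⋯+i_a))), where the inner sum runs over all subsets {i_1 < ⋯ < i_a} of {2,…,n+1} with i_1+⋯+i_a ≤ k (equivalently over all such subsets, since ((n,j)) = 0 for j < 0). -/

import Mathlib

/-- The Mahonian number `T(n,k)`: the number of tuples `(a_1,…,a_n)` of nonnegative
integers with `a_i ≤ i` for each `1 ≤ i ≤ n` and `a_1 + ⋯ + a_n = k`. -/
def mahonian (n k : ℕ) : ℕ :=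
  (Finset.univ.filter
    (fun a : (i : Fin n) → Fin ((i : ℕ) + 2) => ∑ i, ((a i : ℕ)) = k)).card

/-- The multiset coefficient `((n, j))`, extended to integer arguments:
`((n, j)) = C(n + j - 1, j)` for `j ≥ 0`, and `0` for `j < 0`. -/
def multisetCoeff (n : ℕ) (j : ℤ) : ℤ :=
  if j < 0 then 0 else ((n + j.toNat - 1).choose j.toNat : ℤ)

open PowerSeries Finset in
private lemma mahonian_coeff (n k : ℕ) :
    (PowerSeries.coeff (R := ℤ) k) (∏ i : Fin n, ∑ j ∈ Finset.range ((i : ℕ) + 2), (X : ℤ⟦X⟧) ^ j)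
      = (mahonian n k : ℤ) := by
  have h1 : ∀ i : Fin n, ∑ j ∈ Finset.range ((i : ℕ) + 2), (X : ℤ⟦X⟧) ^ j
      = ∑ j ∈ (Finset.univ : Finset (Fin ((i : ℕ) + 2))), (X : ℤ⟦X⟧) ^ (j : ℕ) :=
    fun i => (Fin.sum_univ_eq_sum_range _ _).symm
  simp_rw [h1]
  rw [Finset.prod_univ_sum]
  rw [Fintype.piFinset_univ, map_sum]
  have h2 : ∀ a : (i : Fin n) → Fin ((i : ℕ) + 2),
      ∏ i, (X : ℤ⟦X⟧) ^ ((a i : ℕ)) = (X : ℤ⟦X⟧) ^ (∑ i, (a i : ℕ)) :=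
    fun a => Finset.prod_pow_eq_pow_sum _ _ _
  simp_rw [h2, PowerSeries.coeff_X_pow]
  rw [mahonian, Finset.card_filter]
  push_cast
  exact Finset.sum_congr rfl fun a _ => by simp [eq_comm]

open PowerSeries Finset in
private lemma geom_prod_mul (n : ℕ) :
    (∏ i : Fin n, ∑ j ∈ Finset.range ((i : ℕ) + 2), (X : ℤ⟦X⟧) ^ j) * (1 - X) ^ n
      = ∏ m ∈ Finset.Icc 2 (n + 1), (1 - (X : ℤ⟦X⟧) ^ m) := by
  have hpow : ((1 : ℤ⟦X⟧) - X) ^ n = ∏ _i : Fin n, (1 - X) := by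
    simp [Finset.prod_const]
  rw [hpow, ← Finset.prod_mul_distrib]
  have h1 : ∀ i : Fin n,
      (∑ j ∈ Finset.range ((i : ℕ) + 2), (X : ℤ⟦X⟧) ^ j) * (1 - X) = 1 - X ^ ((i : ℕ) + 2) :=
    fun i => by linear_combination -geom_sum_mul (X : ℤ⟦X⟧) ((i : ℕ) + 2)
  simp_rw [h1]
  rw [Fin.prod_univ_eq_prod_range (fun m => 1 - (X : ℤ⟦X⟧) ^ (m + 2)) n]
  refine Finset.prod_nbij' (fun m => m + 2) (fun m => m - 2) ?_ ?_ ?_ ?_ ?_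
  · intro a ha; simp only [Finset.mem_range] at ha; simp only [Finset.mem_Icc]; omega
  · intro a ha; simp only [Finset.mem_Icc] at ha; simp only [Finset.mem_range]; omega
  · intro a ha; show a + 2 - 2 = a; omega
  · intro a ha; simp only [Finset.mem_Icc] at ha; show a - 2 + 2 = a; omega
  · intro a ha; rfl

open PowerSeries Finset in
/-- For `n ≥ 1` and `0 ≤ k ≤ n(n+1)/2`,
`T(n,k) = ((n,k)) + ∑_{a=1}^{n} (−1)^a ∑_{ {i_1<⋯<i_a} ⊆ {2,…,n+1} } ((n, k−(i_1+⋯+i_a)))`,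
the inner sum over all size-`a` subsets of `{2,…,n+1}` (terms with
`i_1+⋯+i_a > k` vanish since `((n,j)) = 0` for `j < 0`). -/
theorem mahonian_eq_alternating_multisetCoeff (n k : ℕ) (hn : 1 ≤ n)
    (hk : k ≤ n * (n + 1) / 2) :
    (mahonian n k : ℤ)
      = multisetCoeff n (k : ℤ)
        + ∑ a ∈ Finset.Icc 1 n, (-1 : ℤ) ^ a *
            ∑ S ∈ (Finset.Icc 2 (n + 1)).powersetCard a,
              multisetCoeff n ((k : ℤ) - ∑ i ∈ S, (i : ℤ)) := by
  classical
  set G : ℤ⟦X⟧ := (PowerSeries.invOneSubPow ℤ n).val with hG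
  set P : ℤ⟦X⟧ := ∏ i : Fin n, ∑ j ∈ Finset.range ((i : ℕ) + 2), (X : ℤ⟦X⟧) ^ j with hP
  have hunit : ((1 : ℤ⟦X⟧) - X) ^ n * G = 1 := by
    rw [hG, ← PowerSeries.invOneSubPow_inv_eq_one_sub_pow]
    exact (PowerSeries.invOneSubPow ℤ n).inv_val
  have hPG : P = (∏ m ∈ Finset.Icc 2 (n + 1), (1 - (X : ℤ⟦X⟧) ^ m)) * G := by
    calc P = P * (((1 : ℤ⟦X⟧) - X) ^ n * G) := by rw [hunit, mul_one]
    _ = (P * ((1 : ℤ⟦X⟧) - X) ^ n) * G := by ring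
    _ = _ := by rw [hP, geom_prod_mul]
  have hexp : ∏ m ∈ Finset.Icc 2 (n + 1), (1 - (X : ℤ⟦X⟧) ^ m)
      = ∑ S ∈ (Finset.Icc 2 (n + 1)).powerset,
          (-1 : ℤ⟦X⟧) ^ S.card * X ^ (∑ i ∈ S, i) := by
    have : ∀ m ∈ Finset.Icc 2 (n + 1), (1 - (X : ℤ⟦X⟧) ^ m) = -(X ^ m) + 1 := by
      intro m _; ring
    rw [Finset.prod_congr rfl this, Finset.prod_add]
    refine Finset.sum_congr rfl fun S _ => ?_
    rw [Finset.prod_const_one, mul_one]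
    have : ∀ i ∈ S, -((X : ℤ⟦X⟧) ^ i) = (-1) * X ^ i := fun i _ => by ring
    rw [Finset.prod_congr rfl this, Finset.prod_mul_distrib, Finset.prod_const,
      Finset.prod_pow_eq_pow_sum]
  have hterm : ∀ S : Finset ℕ,
      PowerSeries.coeff (R := ℤ) k ((-1 : ℤ⟦X⟧) ^ S.card * X ^ (∑ i ∈ S, i) * G)
        = (-1 : ℤ) ^ S.card * multisetCoeff n ((k : ℤ) - ∑ i ∈ S, (i : ℤ)) := by
    intro S
    have hsum : ((∑ i ∈ S, i : ℕ) : ℤ) = ∑ i ∈ S, (i : ℤ) := by push_cast; rfl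
    have hC : ((-1 : ℤ⟦X⟧)) = PowerSeries.C (R := ℤ) (-1) := by simp
    rw [mul_assoc, hC, ← map_pow, PowerSeries.coeff_C_mul, PowerSeries.coeff_X_pow_mul']
    congr 1
    by_cases hm : (∑ i ∈ S, i) ≤ k
    · rw [if_pos hm]
      rw [hG, PowerSeries.invOneSubPow_val_eq_mk_sub_one_add_choose_of_pos ℤ n (by omega),
        PowerSeries.coeff_mk]
      rw [multisetCoeff, if_neg (by rw [← hsum]; push_cast; omega)]
      have htn : ((k : ℤ) - ∑ i ∈ S, (i : ℤ)).toNat = k - ∑ i ∈ S, i := by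
        rw [← hsum]; omega
      rw [htn]
      set j := k - ∑ i ∈ S, i with hj
      have h1 : n - 1 + j = n + j - 1 := by omega
      have h2 : (n + j - 1).choose (n - 1) = (n + j - 1).choose j := by
        have h3 : n - 1 ≤ n + j - 1 := by omega
        have h4 : n + j - 1 - (n - 1) = j := by omega
        rw [← Nat.choose_symm h3, h4]
      rw [h1, h2]
    · rw [if_neg hm]
      rw [multisetCoeff, if_pos (by rw [← hsum]; push_cast; omega)]
  have key : (mahonian n k : ℤ)
      = ∑ S ∈ (Finset.Icc 2 (n + 1)).powerset,
          (-1 : ℤ) ^ S.card * multisetCoeff n ((k : ℤ) - ∑ i ∈ S, (i : ℤ)) := by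
    rw [← mahonian_coeff n k, ← hP, hPG, hexp, Finset.sum_mul, map_sum]
    exact Finset.sum_congr rfl fun S _ => hterm S
  rw [key, Finset.sum_powerset]
  have hcard : (Finset.Icc 2 (n + 1)).card = n := by
    rw [Nat.card_Icc]; omega
  have hrange : Finset.range ((Finset.Icc 2 (n + 1)).card + 1) = insert 0 (Finset.Icc 1 n) := by
    rw [hcard]; ext a; simp only [Finset.mem_range, Finset.mem_insert, Finset.mem_Icc]; omega
  rw [hrange, Finset.sum_insert (by simp)]
  congr 1
  · rw [Finset.powersetCard_zero, Finset.sum_singleton]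
    simp [multisetCoeff]
  · refine Finset.sum_congr rfl fun a ha => ?_
    rw [Finset.mul_sum]
    refine Finset.sum_congr rfl fun S hS => ?_
    rw [(Finset.mem_powersetCard.mp hS).2]
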